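/- Let μ, ν, ξ be nonnegative real numbers with μ·ξ ≤ ν², and let α, β, γ be real numbers such that the 2×2 symmetric matrix with rows (α, β) and (β, γ) is negative semidefinite. If μ+α ≥ 0, ν+β ≥ 0, and ξ+γ ≥ 0, then (μ+α)·(ν+β)·(ξ+γ) ≤ μ·ν·ξ. -/
import Mathlib


theorem lorentzian_plus_negSemidef (μ ν ξ α β γ : ℝ)
    (hμ : 0 ≤ μ) (hν : 0 ≤ ν) (hξ : 0 ≤ ξ) (hlor : μ * ξ ≤ ν ^ 2)
    (hnsd : ∀ u v : ℝ, α * u ^ 2 + 2 * β * u * v + γ * v ^ 2 ≤ 0)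
    (h1 : 0 ≤ μ + α) (h2 : 0 ≤ ν + β) (h3 : 0 ≤ ξ + γ) :
    (μ + α) * (ν + β) * (ξ + γ) ≤ μ * ν * ξ := by
  have hα : α ≤ 0 := by have := hnsd 1 0; nlinarith
  have hγ : γ ≤ 0 := by have := hnsd 0 1; nlinarith
  have hβ : β ^ 2 ≤ α * γ := by
    rcases lt_or_eq_of_le hα with h | h
    · have := hnsd β (-α); nlinarith
    · rcases lt_or_eq_of_le hγ with h' | h'
      · have := hnsd (-γ) β; nlinarith
      · have k1 := hnsd 1 1
        have k2 := hnsd 1 (-1)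
        nlinarith
  have hαγ : 0 ≤ α * γ := le_trans (sq_nonneg β) hβ
  have ha : μ + α ≤ μ := by linarith
  have hc : ξ + γ ≤ ξ := by linarith
  have hac : (μ + α) * (ξ + γ) ≤ μ * ξ := mul_le_mul ha hc h3 hμ
  rcases le_or_gt β 0 with hb | hb
  · nlinarith [mul_nonneg h1 h3, mul_nonneg (mul_nonneg h1 h3) hν]
  · -- β > 0
    have hacnn : 0 ≤ (μ + α) * (ξ + γ) := mul_nonneg h1 h3
    have step1 : ((μ + α) * (ξ + γ)) ^ 2 ≤ ((μ + α) * ξ) * (μ * ξ) := by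
      have h4 : (μ + α) * (ξ + γ) ≤ (μ + α) * ξ := by nlinarith
      nlinarith [mul_le_mul h4 hac hacnn (mul_nonneg h1 hξ)]
    have step2 : ((μ + α) * (ξ + γ) * β) ^ 2 ≤ ((μ + α) * (ξ + γ)) ^ 2 * (α * γ) := by
      nlinarith [mul_le_mul_of_nonneg_left hβ (sq_nonneg ((μ + α) * (ξ + γ)))]
    have step3 : ((μ + α) * (ξ + γ)) ^ 2 * (α * γ) ≤ 4 * ((μ + α) * ξ * (μ * ξ)) * (α * γ) := by
      nlinarith [mul_le_mul_of_nonneg_right step1 hαγ, mul_nonneg (mul_nonneg (mul_nonneg h1 hξ) (mul_nonneg hμ hξ)) hαγ]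
    have amgm : 4 * (ξ * (-α)) * ((μ + α) * (-γ)) ≤ (ξ * (-α) + (μ + α) * (-γ)) ^ 2 := by
      nlinarith [sq_nonneg (ξ * (-α) - (μ + α) * (-γ))]
    have hdiff : ξ * (-α) + (μ + α) * (-γ) = μ * ξ - (μ + α) * (ξ + γ) := by ring
    have step4 : 4 * ((μ + α) * ξ * (μ * ξ)) * (α * γ) ≤ ν ^ 2 * (μ * ξ - (μ + α) * (ξ + γ)) ^ 2 := by
      have hmξ : 0 ≤ μ * ξ := mul_nonneg hμ hξ
      have key : μ * ξ * (4 * (ξ * (-α)) * ((μ + α) * (-γ))) ≤ μ * ξ * (μ * ξ - (μ + α) * (ξ + γ)) ^ 2 := by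
        rw [← hdiff]; exact mul_le_mul_of_nonneg_left amgm hmξ
      calc 4 * ((μ + α) * ξ * (μ * ξ)) * (α * γ)
          = μ * ξ * (4 * (ξ * (-α)) * ((μ + α) * (-γ))) := by ring
        _ ≤ μ * ξ * (μ * ξ - (μ + α) * (ξ + γ)) ^ 2 := key
        _ ≤ ν ^ 2 * (μ * ξ - (μ + α) * (ξ + γ)) ^ 2 :=
            mul_le_mul_of_nonneg_right hlor (sq_nonneg _)
    have hQ2P2 : ((μ + α) * (ξ + γ) * β) ^ 2 ≤ (ν * (μ * ξ - (μ + α) * (ξ + γ))) ^ 2 := by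
      calc ((μ + α) * (ξ + γ) * β) ^ 2 ≤ ((μ + α) * (ξ + γ)) ^ 2 * (α * γ) := step2
        _ ≤ 4 * ((μ + α) * ξ * (μ * ξ)) * (α * γ) := step3
        _ ≤ ν ^ 2 * (μ * ξ - (μ + α) * (ξ + γ)) ^ 2 := step4
        _ = (ν * (μ * ξ - (μ + α) * (ξ + γ))) ^ 2 := by ring
    have hQ : 0 ≤ (μ + α) * (ξ + γ) * β := mul_nonneg hacnn hb.le
    have hP : 0 ≤ ν * (μ * ξ - (μ + α) * (ξ + γ)) := mul_nonneg hν (by linarith)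
    have hQP : (μ + α) * (ξ + γ) * β ≤ ν * (μ * ξ - (μ + α) * (ξ + γ)) :=
      (pow_le_pow_iff_left₀ hQ hP (by norm_num)).mp hQ2P2
    linarith [hQP]
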